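/- arXiv:2502.19799 — 2 statements merged into one kernel-verified Lean document; each statement's English description precedes it below -/
import Mathlib

section
/- For all integers n ≥ 1 and 0 ≤ j ≤ n-1, the alternating sum ∑_{k=1}^{n} (-1)^{k-1} C(n,k) C(n-k-1, j) equals C(n-1, j), where C(n-k-1, j) is interpreted via the generalized binomial coefficient convention so that C(-1, j) = (-1)^j. -/
open Finset Function

lemma fwdDiff_ringChoose (j : ℕ) :
    fwdDiff (1:ℤ) (fun x : ℤ => Ring.choose x (j + 1)) = fun x : ℤ => Ring.choose x j := by
  ext x
  simp [fwdDiff, Ring.choose_succ_succ x j]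

lemma fwdDiff_iter_ringChoose_zero (j : ℕ) :
    (fwdDiff (1:ℤ))^[j + 1] (fun x : ℤ => Ring.choose x j) = fun _ => 0 := by
  induction j with
  | zero =>
    have h : (fun x : ℤ => Ring.choose x 0) = fun _ : ℤ => (1:ℤ) := by
      ext x; exact Ring.choose_zero_right x
    rw [h]
    simp [Function.iterate_one, fwdDiff_const]
  | succ j ih =>
    rw [Function.iterate_succ_apply, fwdDiff_ringChoose, ih]

lemma fwdDiff_iter_ringChoose_zero' (j n : ℕ) (h : j < n) :
    (fwdDiff (1:ℤ))^[n] (fun x : ℤ => Ring.choose x j) = fun _ => 0 := by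
  have hz : ∀ m : ℕ, (fwdDiff (1:ℤ))^[m] (fun _ : ℤ => (0:ℤ)) = fun _ => 0 := by
    intro m
    induction m with
    | zero => rfl
    | succ m ih => rw [Function.iterate_succ_apply, fwdDiff_const, ih]
  obtain ⟨m, rfl⟩ : ∃ m, n = m + (j + 1) := ⟨n - (j+1), by omega⟩
  rw [Function.iterate_add_apply, fwdDiff_iter_ringChoose_zero, hz]

/-- For all integers `n ≥ 1` and `0 ≤ j ≤ n-1`, the alternating sum
`∑_{k=1}^{n} (-1)^{k-1} C(n,k) C(n-k-1, j)` equals `C(n-1, j)`, where the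
inner binomial coefficient is the generalized (binomial ring) one on `ℤ`,
so that `C(-1, j) = (-1)^j`. -/
theorem stmt_0 (n : ℕ) (hn : 1 ≤ n) (j : ℕ) (hj : j ≤ n - 1) :
    ∑ k ∈ Finset.Icc 1 n,
      (-1 : ℤ) ^ (k - 1) * (n.choose k : ℤ) * Ring.choose ((n : ℤ) - k - 1) j
      = ((n - 1).choose j : ℤ) := by
  have key : (0:ℤ) = ∑ k ∈ range (n+1),
      ((-1:ℤ)^(n-k) * n.choose k) • (Ring.choose ((-1:ℤ) + k • (1:ℤ)) j) := by
    have h1 := fwdDiff_iter_eq_sum_shift (1:ℤ) (fun x : ℤ => Ring.choose x j) n (-1)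
    rw [fwdDiff_iter_ringChoose_zero' j n (by omega)] at h1
    exact h1
  rw [← Finset.sum_range_reflect] at key
  simp only [Nat.add_sub_cancel] at key
  have key2 : (0:ℤ) = ∑ k ∈ range (n + 1),
      (-1:ℤ) ^ k * (n.choose k : ℤ) * Ring.choose ((n:ℤ) - k - 1) j := by
    rw [key]
    apply Finset.sum_congr rfl
    intro k hk
    rw [Finset.mem_range] at hk
    have hk' : k ≤ n := by omega
    have h1 : n - (n - k) = k := by omega
    have h2 : (-1:ℤ) + ((n - k : ℕ)) • (1:ℤ) = (n:ℤ) - k - 1 := by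
      rw [nsmul_eq_mul, mul_one]
      push_cast [hk']
      ring
    rw [h1, Nat.choose_symm hk', smul_eq_mul, h2]
  have hins : range (n + 1) = insert 0 (Finset.Icc 1 n) := by
    ext x; simp [Finset.mem_range, Finset.mem_Icc]; omega
  rw [hins, Finset.sum_insert (by simp)] at key2
  simp only [pow_zero, one_mul, Nat.choose_zero_right, Nat.cast_one, Nat.cast_zero,
    sub_zero] at key2
  have h0 : Ring.choose ((n:ℤ) - 1) j = ((n-1).choose j : ℤ) := by
    have h : (n:ℤ) - 1 = ((n - 1 : ℕ) : ℤ) := by push_cast [hn]; ring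
    rw [h, Ring.choose_natCast]
  rw [h0] at key2
  have hneg : ∑ k ∈ Finset.Icc 1 n,
      (-1 : ℤ) ^ (k - 1) * (n.choose k : ℤ) * Ring.choose ((n : ℤ) - k - 1) j
      = - ∑ k ∈ Finset.Icc 1 n,
      (-1 : ℤ) ^ k * (n.choose k : ℤ) * Ring.choose ((n : ℤ) - k - 1) j := by
    rw [← Finset.sum_neg_distrib]
    apply Finset.sum_congr rfl
    intro k hk
    rw [Finset.mem_Icc] at hk
    obtain ⟨m, rfl⟩ : ∃ m, k = m + 1 := ⟨k - 1, by omega⟩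
    simp [pow_succ]
  rw [hneg]
  linarith [key2]
end

section
/- For all 1 ≤ m ≤ n, the polynomial ∑_{j=0}^{m-1} C(m-1,j) C(n-1,j) x^j satisfies the recurrence ∑_{j=0}^{m-1} C(m-1,j) C(n-1,j) x^j = ∑_{k=1}^{n} (-1)^{k-1} C(n,k) · E(m, n-k)(x), where E(m, r)(x) = ∑_{j=0}^{m-1} C(m-1,j) C(r-1,j) x^j for r ≥ 1 and E(m,0)(x) = (1-x)^{m-1}. -/
open Polynomial



/-- extended binomial: c r j = C(r-1,j) for r ≥ 1, c 0 j = (-1)^j -/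
def cc : ℕ → ℕ → ℤ
  | 0, j => (-1) ^ j
  | r+1, j => (r.choose j : ℤ)

lemma cc_zero (r : ℕ) : cc r 0 = 1 := by
  cases r <;> simp [cc]

lemma cc_pascal (r j : ℕ) : cc (r+1) (j+1) = cc r (j+1) + cc r j := by
  cases r with
  | zero => simp [cc, pow_succ]
  | succ r => simp [cc, Nat.choose_succ_succ]; push_cast; ring

lemma Dlemma : ∀ j n : ℕ, j < n →
    ∑ r ∈ Finset.range (n+1), (-1:ℤ)^r * (n.choose r : ℤ) * cc r j = 0 := by
  intro j
  induction j with
  | zero =>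
    intro n hn
    simp only [cc_zero, mul_one]
    rw [Int.alternating_sum_range_choose, if_neg (by omega)]
  | succ j ih =>
    intro n hn
    obtain ⟨m, rfl⟩ : ∃ m, n = m + 1 := ⟨n - 1, by omega⟩
    have hshift : ∑ s ∈ Finset.range (m+1),
          (-1:ℤ)^(s+1) * (m.choose (s+1) : ℤ) * cc (s+1) (j+1)
        = (∑ r ∈ Finset.range (m+1), (-1:ℤ)^r * (m.choose r : ℤ) * cc r (j+1))
            - (-1:ℤ)^(j+1) := by
      rw [Finset.sum_range_succ (fun s => (-1:ℤ)^(s+1) * (m.choose (s+1) : ℤ) * cc (s+1) (j+1)),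
        Finset.sum_range_succ' (fun r => (-1:ℤ)^r * (m.choose r : ℤ) * cc r (j+1))]
      simp [Nat.choose_succ_self, cc]
    have expand : ∑ r ∈ Finset.range (m+2), (-1:ℤ)^r * ((m+1).choose r : ℤ) * cc r (j+1)
        = (∑ s ∈ Finset.range (m+1),
            ((-1:ℤ)^(s+1) * (m.choose (s+1) : ℤ) * cc (s+1) (j+1)
              + (-1:ℤ)^(s+1) * (m.choose s : ℤ) * (cc s (j+1) + cc s j)))
          + (-1:ℤ)^(j+1) := by
      rw [Finset.sum_range_succ' (fun r => (-1:ℤ)^r * ((m+1).choose r : ℤ) * cc r (j+1))]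
      congr 1
      · refine Finset.sum_congr rfl fun s _ => ?_
        rw [Nat.choose_succ_succ' (m) s, cc_pascal]
        push_cast
        ring
      · simp [cc]
    rw [expand, Finset.sum_add_distrib, hshift]
    have h1 : ∑ s ∈ Finset.range (m+1),
        (-1:ℤ)^(s+1) * (m.choose s : ℤ) * (cc s (j+1) + cc s j)
        = -(∑ r ∈ Finset.range (m+1), (-1:ℤ)^r * (m.choose r : ℤ) * cc r (j+1))
          - (∑ r ∈ Finset.range (m+1), (-1:ℤ)^r * (m.choose r : ℤ) * cc r j) := by
      calc ∑ s ∈ Finset.range (m+1),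
            (-1:ℤ)^(s+1) * (m.choose s : ℤ) * (cc s (j+1) + cc s j)
          = ∑ s ∈ Finset.range (m+1),
              (-((-1:ℤ)^s * (m.choose s : ℤ) * cc s (j+1))
                + -((-1:ℤ)^s * (m.choose s : ℤ) * cc s j)) :=
            Finset.sum_congr rfl fun s _ => by ring
        _ = _ := by
            rw [Finset.sum_add_distrib, Finset.sum_neg_distrib, Finset.sum_neg_distrib]
            ring
    rw [h1, ih m (by omega)]
    ring


lemma scalar (n j : ℕ) (hj : j < n) :
    cc n j = ∑ k ∈ Finset.Icc 1 n, (-1:ℤ)^(k-1) * (n.choose k : ℤ) * cc (n-k) j := by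
  have hD := Dlemma j n hj
  rw [Finset.sum_range_succ, Nat.choose_self] at hD
  have hbij : ∑ k ∈ Finset.Icc 1 n, (-1:ℤ)^(k-1) * (n.choose k : ℤ) * cc (n-k) j
      = ∑ r ∈ Finset.range n, (-1:ℤ)^(n-r-1) * (n.choose r : ℤ) * cc r j := by
    refine Finset.sum_bij' (fun k _ => n - k) (fun r _ => n - r) ?_ ?_ ?_ ?_ ?_
    · intro k hk
      simp only [Finset.mem_Icc] at hk
      simp only [Finset.mem_range]; omega
    · intro r hr
      simp only [Finset.mem_range] at hr
      simp only [Finset.mem_Icc]; omega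
    · intro k hk
      simp only [Finset.mem_Icc] at hk
      show n - (n - k) = k; omega
    · intro r hr
      simp only [Finset.mem_range] at hr
      show n - (n - r) = r; omega
    · intro k hk
      simp only [Finset.mem_Icc] at hk
      have h1 : n - (n - k) - 1 = k - 1 := by omega
      have h2 : n.choose (n - k) = n.choose k := Nat.choose_symm hk.2
      show (-1:ℤ)^(k-1) * (n.choose k : ℤ) * cc (n-k) j
          = (-1:ℤ)^(n-(n-k)-1) * (n.choose (n-k) : ℤ) * cc (n-k) j
      rw [h1, h2]
  rw [hbij]
  have hpow : ∀ r ∈ Finset.range n,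
      (-1:ℤ)^(n-r-1) * (n.choose r : ℤ) * cc r j
        = (-1:ℤ)^(n-1) * ((-1:ℤ)^r * (n.choose r : ℤ) * cc r j) := by
    intro r hr
    simp only [Finset.mem_range] at hr
    have e : n - r - 1 + r = n - 1 := by omega
    have : (-1:ℤ)^(n-r-1) * (-1:ℤ)^r = (-1:ℤ)^(n-1) := by rw [← pow_add, e]
    calc (-1:ℤ)^(n-r-1) * (n.choose r : ℤ) * cc r j
        = ((-1:ℤ)^(n-r-1) * (-1:ℤ)^r) * ((-1:ℤ)^r * (n.choose r : ℤ) * cc r j) := by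
          have hsq : (-1:ℤ)^r * (-1:ℤ)^r = 1 := by
            rw [← mul_pow]; norm_num
          calc (-1:ℤ)^(n-r-1) * (n.choose r : ℤ) * cc r j
              = ((-1:ℤ)^r * (-1:ℤ)^r) * ((-1:ℤ)^(n-r-1) * (n.choose r : ℤ) * cc r j) := by
                rw [hsq]; ring
            _ = _ := by ring
      _ = (-1:ℤ)^(n-1) * ((-1:ℤ)^r * (n.choose r : ℤ) * cc r j) := by rw [this]
  rw [Finset.sum_congr rfl hpow, ← Finset.mul_sum]
  have hsum : ∑ r ∈ Finset.range n, (-1:ℤ)^r * (n.choose r : ℤ) * cc r j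
      = -((-1:ℤ)^n * 1 * cc n j) := by push_cast at hD; linarith [hD]
  rw [hsum]
  obtain ⟨t, rfl⟩ : ∃ t, n = t + 1 := ⟨n - 1, by omega⟩
  simp only [Nat.add_sub_cancel]
  have hone : (-1:ℤ)^t * (-1:ℤ)^(t+1) = -1 := by
    rw [← pow_add, show t + (t+1) = 2*t+1 by ring, pow_succ, pow_mul]
    norm_num
  linear_combination (cc (t+1) j) * hone

lemma one_sub_X_pow (t : ℕ) :
    (1 - X : Polynomial ℤ)^t
      = ∑ j ∈ Finset.range (t+1), C ((t.choose j : ℤ) * (-1:ℤ)^j) * X^j := by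
  rw [sub_eq_add_neg, add_comm, add_pow]
  refine Finset.sum_congr rfl fun j hj => ?_
  rw [neg_pow, one_pow, C_mul, map_pow, map_neg, map_one, C_eq_natCast]
  ring

/-- The closed-form polynomial `E m r = ∑_{j=0}^{m-1} C(m-1,j) C(r-1,j) x^j` for
`r ≥ 1`, with `E m 0 = (1-x)^(m-1)`. -/
noncomputable def Epoly (m r : ℕ) : Polynomial ℤ :=
  if r = 0 then (1 - X) ^ (m - 1)
  else ∑ j ∈ Finset.range m, C (((m - 1).choose j : ℤ) * ((r - 1).choose j : ℤ)) * X ^ j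



lemma Epoly_eq (m r : ℕ) (hm : 1 ≤ m) :
    Epoly m r = ∑ j ∈ Finset.range m, C (((m-1).choose j : ℤ) * cc r j) * X ^ j := by
  cases r with
  | zero =>
    rw [Epoly, if_pos rfl]
    obtain ⟨t, rfl⟩ : ∃ t, m = t + 1 := ⟨m - 1, by omega⟩
    simp only [Nat.add_sub_cancel]
    rw [one_sub_X_pow]
    rfl
  | succ s =>
    rw [Epoly, if_neg (Nat.succ_ne_zero s)]
    rfl

/-- For all `1 ≤ m ≤ n`, the polynomial `∑_{j=0}^{m-1} C(m-1,j) C(n-1,j) x^j`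
satisfies the recurrence
`∑_j C(m-1,j) C(n-1,j) x^j = ∑_{k=1}^{n} (-1)^{k-1} C(n,k) E(m, n-k)(x)`. -/
theorem stmt_2 (m n : ℕ) (hm : 1 ≤ m) (hmn : m ≤ n) :
    ∑ j ∈ Finset.range m, C (((m - 1).choose j : ℤ) * ((n - 1).choose j : ℤ)) * X ^ j
      = ∑ k ∈ Finset.Icc 1 n,
          C ((-1 : ℤ) ^ (k - 1) * (n.choose k : ℤ)) * Epoly m (n - k) := by
  have hE : ∀ k ∈ Finset.Icc 1 n,
      C ((-1:ℤ)^(k-1) * (n.choose k : ℤ)) * Epoly m (n-k)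
        = ∑ j ∈ Finset.range m,
            C (((m-1).choose j : ℤ)
                * ((-1:ℤ)^(k-1) * (n.choose k : ℤ) * cc (n-k) j)) * X^j := by
    intro k _
    rw [Epoly_eq m (n-k) hm, Finset.mul_sum]
    refine Finset.sum_congr rfl fun j _ => ?_
    rw [← mul_assoc, ← C_mul]
    congr 2
    ring
  rw [Finset.sum_congr rfl hE, Finset.sum_comm]
  refine Finset.sum_congr rfl fun j hj => ?_
  have hjn : j < n := lt_of_lt_of_le (Finset.mem_range.mp hj) hmn
  have hc : ((n-1).choose j : ℤ) = cc n j := by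
    obtain ⟨t, rfl⟩ : ∃ t, n = t+1 := ⟨n-1, by omega⟩
    simp [cc]
  rw [hc, scalar n j hjn, Finset.mul_sum, map_sum, Finset.sum_mul]
end
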